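/- Let l ∈ {K4, KD4, S4}, let φ be a modal formula, and let a, b, c be maximal states for l with respect to φ. If B(a) = B(b), D(a) = D(b), th(a) → ◇th(c) is valid for l, and th(b) → ◇th(c) is not valid for l, then c = a, a ≠ b, and l = S4. -/
import Mathlib


/-- Modal formulas in negation normal form, as in the paper:
φ ::= ⊥ | ⊤ | p | ¬p | φ∧φ | φ∨φ | □φ | ◇φ. -/
inductive Form : Type where
  | bot : Form
  | top : Form
  | pos : ℕ → Form
  | npos : ℕ → Form
  | and : Form → Form → Form
  | or : Form → Form → Form
  | box : Form → Form
  | dia : Form → Form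
deriving DecidableEq

namespace Form

/-- Negation, defined as usual (by De Morgan dualities). -/
def neg : Form → Form
  | bot => top
  | top => bot
  | pos p => npos p
  | npos p => pos p
  | and φ ψ => or φ.neg ψ.neg
  | or φ ψ => and φ.neg ψ.neg
  | box φ => dia φ.neg
  | dia φ => box φ.neg

/-- Implication φ → ψ, defined as usual. -/
def imp (φ ψ : Form) : Form := or φ.neg ψ

/-- Bi-implication φ ↔ ψ, defined as usual. -/
def biimp (φ ψ : Form) : Form := and (imp φ ψ) (imp ψ φ)

/-- P(φ): the set of propositional variables occurring in φ. -/
def vars : Form → Finset ℕ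
  | bot => ∅
  | top => ∅
  | pos p => {p}
  | npos p => {p}
  | and φ ψ => φ.vars ∪ ψ.vars
  | or φ ψ => φ.vars ∪ ψ.vars
  | box φ => φ.vars
  | dia φ => φ.vars

/-- Modal depth. -/
def md : Form → ℕ
  | bot => 0
  | top => 0
  | pos _ => 0
  | npos _ => 0
  | and φ ψ => max φ.md ψ.md
  | or φ ψ => max φ.md ψ.md
  | box φ => φ.md + 1
  | dia φ => φ.md + 1

/-- sub(φ): the set of subformulas of φ. -/
def subf : Form → Finset Form
  | bot => {bot}
  | top => {top}
  | pos p => {pos p}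
  | npos p => {npos p}
  | and φ ψ => insert (and φ ψ) (φ.subf ∪ ψ.subf)
  | or φ ψ => insert (or φ ψ) (φ.subf ∪ ψ.subf)
  | box φ => insert (box φ) φ.subf
  | dia φ => insert (dia φ) φ.subf

/-- s̄ub(φ) = sub(φ) ∪ {¬ψ : ψ ∈ sub(φ)}. -/
def subBar (φ : Form) : Finset Form := φ.subf ∪ φ.subf.image neg

/-- □^k φ : k nested boxes. -/
def boxIter : ℕ → Form → Form
  | 0, φ => φ
  | n + 1, φ => box (boxIter n φ)

def isDia : Form → Bool
  | dia _ => true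
  | _ => false

def isBox : Form → Bool
  | box _ => true
  | _ => false

end Form

/-- Big conjunction over a finite set of formulas (⋀∅ = ⊤). -/
noncomputable def bigAnd (s : Finset Form) : Form := s.toList.foldr Form.and Form.top

/-- Big disjunction over a finite set of formulas (⋁∅ = ⊥). -/
noncomputable def bigOr (s : Finset Form) : Form := s.toList.foldr Form.or Form.bot

/-- th(a) = ⋀ a. -/
noncomputable def th (a : Finset Form) : Form := bigAnd a

/-- A finite Kripke model: a nonempty finite set of states, an accessibility
relation and a valuation. -/
structure Model : Type 1 where
  W : Type
  nonempty : Nonempty W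
  finite : Finite W
  R : W → W → Prop
  V : W → Set ℕ

/-- Satisfaction M,w ⊨ φ. -/
def Model.sat (M : Model) : M.W → Form → Prop
  | _, .bot => False
  | _, .top => True
  | w, .pos p => p ∈ M.V w
  | w, .npos p => p ∉ M.V w
  | w, .and φ ψ => M.sat w φ ∧ M.sat w ψ
  | w, .or φ ψ => M.sat w φ ∨ M.sat w ψ
  | w, .box φ => ∀ v, M.R w v → M.sat v φ
  | w, .dia φ => ∃ v, M.R w v ∧ M.sat v φ

/-- The six base logics K, D, T, K4, KD4, S4. -/
inductive BaseLogic : Type where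
  | K | D | T | K4 | KD4 | S4
deriving DecidableEq

/-- A logic: a base logic, possibly extended by axiom 5. -/
structure Logic : Type where
  base : BaseLogic
  has5 : Bool
deriving DecidableEq

def Logic.K : Logic := ⟨.K, false⟩
def Logic.D : Logic := ⟨.D, false⟩
def Logic.T : Logic := ⟨.T, false⟩
def Logic.K4 : Logic := ⟨.K4, false⟩
def Logic.KD4 : Logic := ⟨.KD4, false⟩
def Logic.S4 : Logic := ⟨.S4, false⟩

/-- l + 5. -/
def BaseLogic.plus5 (b : BaseLogic) : Logic := ⟨b, true⟩

/-- M is a model for the logic l (frame conditions). -/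
def Model.IsFor (M : Model) (l : Logic) : Prop :=
  (match l.base with
    | .K => True
    | .D => ∀ w, ∃ v, M.R w v
    | .T => ∀ w, M.R w w
    | .K4 => ∀ a b c, M.R a b → M.R b c → M.R a c
    | .KD4 => (∀ w, ∃ v, M.R w v) ∧ (∀ a b c, M.R a b → M.R b c → M.R a c)
    | .S4 => (∀ w, M.R w w) ∧ (∀ a b c, M.R a b → M.R b c → M.R a c))
  ∧ (l.has5 = true → ∀ a b c, M.R a b → M.R a c → M.R b c)

/-- φ is satisfiable for l: satisfied at some state of some finite model for l. -/
def Satisfiable (l : Logic) (φ : Form) : Prop :=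
  ∃ M : Model, M.IsFor l ∧ ∃ w : M.W, M.sat w φ

/-- φ is valid for l: satisfied at every state of every finite model for l. -/
def Valid (l : Logic) (φ : Form) : Prop :=
  ∀ M : Model, M.IsFor l → ∀ w : M.W, M.sat w φ

/-- φ is complete for l: for every ψ ∈ L(P(φ)), φ→ψ or φ→¬ψ is valid for l. -/
def Complete (l : Logic) (φ : Form) : Prop :=
  ∀ ψ : Form, ψ.vars ⊆ φ.vars → (Valid l (φ.imp ψ) ∨ Valid l (φ.imp ψ.neg))

/-- Z is a bisimulation modulo P from M to M'. -/
def IsBisim (P : Set ℕ) (M M' : Model) (Z : M.W → M'.W → Prop) : Prop :=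
  (∃ s s', Z s s') ∧
  ∀ s s', Z s s' →
    (M.V s ∩ P = M'.V s' ∩ P) ∧
    (∀ t, M.R s t → ∃ t', M'.R s' t' ∧ Z t t') ∧
    (∀ t', M'.R s' t' → ∃ t, M.R s t ∧ Z t t')

/-- (M,a) ∼_P (M',a'). -/
def Bisimilar (P : Set ℕ) (M : Model) (a : M.W) (M' : Model) (a' : M'.W) : Prop :=
  ∃ Z, IsBisim P M M' Z ∧ Z a a'

/-- (M,a) ≡_P (M',a'): the two pointed models satisfy the same formulas of L(P). -/
def EquivP (P : Set ℕ) (M : Model) (a : M.W) (M' : Model) (a' : M'.W) : Prop :=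
  ∀ φ : Form, ↑φ.vars ⊆ P → (M.sat a φ ↔ M'.sat a' φ)

/-- (M,s) is flat (for base logic l, with axiom 5): the carrier is {s}∪W and
R = R1 ∪ R2 with R1 ⊆ {s}×W, R2 an equivalence relation on W, and s ∈ W if
l ∈ {T,S4}. -/
def Flat (l : BaseLogic) (M : Model) (s : M.W) : Prop :=
  ∃ W : Set M.W, (∀ w, w = s ∨ w ∈ W) ∧
    ∃ R1 R2 : M.W → M.W → Prop,
      (∀ x y, M.R x y ↔ (R1 x y ∨ R2 x y)) ∧
      (∀ x y, R1 x y → x = s ∧ y ∈ W) ∧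
      (∀ x y, R2 x y → x ∈ W ∧ y ∈ W) ∧
      (∀ x ∈ W, R2 x x) ∧
      (∀ x y, R2 x y → R2 y x) ∧
      (∀ x y z, R2 x y → R2 y z → R2 x z) ∧
      ((l = .T ∨ l = .S4) → s ∈ W)

/-- A maximal state for l with respect to φ: a maximally l-consistent subset
of s̄ub(φ). -/
def MaxState (l : Logic) (φ : Form) (a : Finset Form) : Prop :=
  a ⊆ φ.subBar ∧ Satisfiable l (th a) ∧ ∀ ψ ∈ φ.subf, ψ ∈ a ∨ ψ.neg ∈ a

/-- D(x) = {◇ψ : ◇ψ ∈ x}. -/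
def DSet (x : Finset Form) : Finset Form := x.filter (fun ψ => ψ.isDia = true)

/-- B(x) = {□ψ : □ψ ∈ x}. -/
def BSet (x : Finset Form) : Finset Form := x.filter (fun ψ => ψ.isBox = true)

/-- A view: a parent-state and a finite set of children-states. -/
structure View : Type where
  parent : Finset Form
  children : Finset (Finset Form)

/-- The view is with respect to φ: all its states are subsets of s̄ub(φ). -/
def View.WF (φ : Form) (S : View) : Prop :=
  S.parent ⊆ φ.subBar ∧ ∀ c ∈ S.children, c ⊆ φ.subBar

/-- A set of formulas is l-closed. -/
def LClosed (l : Logic) (P : Finset ℕ) (s : Finset Form) : Prop :=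
  (∀ φ1 φ2 : Form, Form.and φ1 φ2 ∈ s → φ1 ∈ s ∧ φ2 ∈ s) ∧
  (∀ φ1 φ2 : Form, Form.or φ1 φ2 ∈ s → φ1 ∈ s ∨ φ2 ∈ s) ∧
  ((l.base = .T ∨ l.base = .S4) → ∀ ψ : Form, Form.box ψ ∈ s → ψ ∈ s) ∧
  (∀ p ∈ P, Form.pos p ∈ s ∨ Form.npos p ∈ s)

/-- The view S is l-complete. -/
def ViewLComplete (l : Logic) (P : Finset ℕ) (S : View) : Prop :=
  LClosed l P S.parent ∧
  (∀ c ∈ S.children, LClosed l P c) ∧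
  (∀ ψ : Form, Form.dia ψ ∈ S.parent → ∃ c ∈ S.children, ψ ∈ c) ∧
  (∀ ψ : Form, Form.box ψ ∈ S.parent → ∀ c ∈ S.children, ψ ∈ c) ∧
  ((l.base = .K4 ∨ l.base = .KD4 ∨ l.base = .S4) →
    ∀ ψ : Form, Form.box ψ ∈ S.parent → ∀ c ∈ S.children, Form.box ψ ∈ c) ∧
  (l.base = .KD4 → S.children.Nonempty)

/-- The view S is consistent for l: every one of its states is consistent. -/
def ViewConsistent (l : Logic) (S : View) : Prop :=
  Satisfiable l (th S.parent) ∧ ∀ c ∈ S.children, Satisfiable l (th c)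

/-- d = max{md(th(c')) : c' ∈ C(S)}. -/
noncomputable def childDepth (S : View) : ℕ := S.children.sup (fun c => (th c).md)

/-- A K-maximal child-state: a maximally K-consistent subset of s̄ub_d(φ). -/
def KMaxChild (φ : Form) (d : ℕ) (c : Finset Form) : Prop :=
  c ⊆ φ.subBar.filter (fun ψ => ψ.md ≤ d) ∧
  Satisfiable Logic.K (th c) ∧
  ∀ ψ ∈ φ.subf, ψ.md ≤ d → (ψ ∈ c ∨ ψ.neg ∈ c)

/-- S' completes S (for logic l, with respect to φ). -/
def ViewCompletes (l : Logic) (φ : Form) (S' S : View) : Prop :=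
  ViewLComplete l φ.vars S' ∧
  S.parent ⊆ S'.parent ∧
  (∀ a ∈ S.children, ∃ a' ∈ S'.children, a ⊆ a') ∧
  (l.base = .K → ∀ a' ∈ S'.children, KMaxChild φ (childDepth S') a') ∧
  (l.base ≠ .K → ∀ a' ∈ S'.children, MaxState l φ a')

/-- The depth-0 normal form ⋀_{p∈S} p ∧ ⋀_{p∈P∖S} ¬p. -/
noncomputable def nf0 (P S : Finset ℕ) : Form :=
  Form.and (bigAnd (S.image Form.pos)) (bigAnd ((P \ S).image Form.npos))

/-- Fine's normal forms F_P^d. -/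
noncomputable def NF (P : Finset ℕ) : ℕ → Set Form
  | 0 => { χ | ∃ S ⊆ P, χ = nf0 P S }
  | d + 1 => { χ | ∃ S : Finset Form, ↑S ⊆ NF P d ∧ ∃ S0 ⊆ P,
      χ = Form.and (nf0 P S0)
            (Form.and (bigAnd (S.image Form.dia)) (Form.box (bigOr S))) }

/-- φ is complete up to its depth for l. -/
def CompleteUpToDepth (l : Logic) (φ : Form) : Prop :=
  ∀ ψ : Form, ψ.vars ⊆ φ.vars → ψ.md ≤ φ.md →
    (Valid l (φ.imp ψ) ∨ Valid l (φ.imp ψ.neg))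

/-! ### Auxiliary lemmas for Statement 11 -/

lemma Form.self_mem_subf (φ : Form) : φ ∈ φ.subf := by
  cases φ <;> simp [Form.subf]

lemma Form.subf_trans : ∀ φ χ : Form, χ ∈ φ.subf → χ.subf ⊆ φ.subf := by
  intro φ
  induction φ with
  | bot => intro χ h; simp [Form.subf] at h; subst h; exact subset_rfl
  | top => intro χ h; simp [Form.subf] at h; subst h; exact subset_rfl
  | pos p => intro χ h; simp [Form.subf] at h; subst h; exact subset_rfl
  | npos p => intro χ h; simp [Form.subf] at h; subst h; exact subset_rfl
  | and φ1 φ2 ih1 ih2 =>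
    intro χ h
    rcases Finset.mem_insert.mp h with h | h
    · subst h; exact subset_rfl
    · rcases Finset.mem_union.mp h with h | h
      · exact (ih1 χ h).trans ((Finset.subset_union_left).trans (Finset.subset_insert _ _))
      · exact (ih2 χ h).trans ((Finset.subset_union_right).trans (Finset.subset_insert _ _))
  | or φ1 φ2 ih1 ih2 =>
    intro χ h
    rcases Finset.mem_insert.mp h with h | h
    · subst h; exact subset_rfl
    · rcases Finset.mem_union.mp h with h | h
      · exact (ih1 χ h).trans ((Finset.subset_union_left).trans (Finset.subset_insert _ _))
      · exact (ih2 χ h).trans ((Finset.subset_union_right).trans (Finset.subset_insert _ _))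
  | box φ1 ih =>
    intro χ h
    rcases Finset.mem_insert.mp h with h | h
    · subst h; exact subset_rfl
    · exact (ih χ h).trans (Finset.subset_insert _ _)
  | dia φ1 ih =>
    intro χ h
    rcases Finset.mem_insert.mp h with h | h
    · subst h; exact subset_rfl
    · exact (ih χ h).trans (Finset.subset_insert _ _)

lemma mem_subBar_of_subf {φ χ : Form} (h : χ ∈ φ.subf) : χ ∈ φ.subBar :=
  Finset.mem_union.mpr (Or.inl h)

lemma mem_subBar_neg_of_subf {φ χ : Form} (h : χ ∈ φ.subf) : χ.neg ∈ φ.subBar :=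
  Finset.mem_union.mpr (Or.inr (Finset.mem_image.mpr ⟨χ, h, rfl⟩))

lemma subBar_cases {φ χ : Form} (h : χ ∈ φ.subBar) :
    χ ∈ φ.subf ∨ ∃ ψ ∈ φ.subf, χ = ψ.neg := by
  rcases Finset.mem_union.mp h with h | h
  · exact Or.inl h
  · obtain ⟨ψ, hψ, hψ2⟩ := Finset.mem_image.mp h
    exact Or.inr ⟨ψ, hψ, hψ2.symm⟩

lemma subBar_and {φ χ1 χ2 : Form} (h : Form.and χ1 χ2 ∈ φ.subBar) :
    χ1 ∈ φ.subBar ∧ χ2 ∈ φ.subBar := by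
  rcases subBar_cases h with h | ⟨ψ, hψ, heq⟩
  · have h1 : χ1 ∈ (Form.and χ1 χ2).subf := by
      simp [Form.subf, Form.self_mem_subf]
    have h2 : χ2 ∈ (Form.and χ1 χ2).subf := by
      simp [Form.subf, Form.self_mem_subf]
    exact ⟨mem_subBar_of_subf (Form.subf_trans _ _ h h1),
      mem_subBar_of_subf (Form.subf_trans _ _ h h2)⟩
  · cases ψ <;> simp [Form.neg] at heq
    case or ψ1 ψ2 =>
      obtain ⟨e1, e2⟩ := heq
      subst e1; subst e2
      have h1 : ψ1 ∈ (Form.or ψ1 ψ2).subf := by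
        simp [Form.subf, Form.self_mem_subf]
      have h2 : ψ2 ∈ (Form.or ψ1 ψ2).subf := by
        simp [Form.subf, Form.self_mem_subf]
      exact ⟨mem_subBar_neg_of_subf (Form.subf_trans _ _ hψ h1),
        mem_subBar_neg_of_subf (Form.subf_trans _ _ hψ h2)⟩

lemma subBar_or {φ χ1 χ2 : Form} (h : Form.or χ1 χ2 ∈ φ.subBar) :
    χ1 ∈ φ.subBar ∧ χ2 ∈ φ.subBar := by
  rcases subBar_cases h with h | ⟨ψ, hψ, heq⟩
  · have h1 : χ1 ∈ (Form.or χ1 χ2).subf := by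
      simp [Form.subf, Form.self_mem_subf]
    have h2 : χ2 ∈ (Form.or χ1 χ2).subf := by
      simp [Form.subf, Form.self_mem_subf]
    exact ⟨mem_subBar_of_subf (Form.subf_trans _ _ h h1),
      mem_subBar_of_subf (Form.subf_trans _ _ h h2)⟩
  · cases ψ <;> simp [Form.neg] at heq
    case and ψ1 ψ2 =>
      obtain ⟨e1, e2⟩ := heq
      subst e1; subst e2
      have h1 : ψ1 ∈ (Form.and ψ1 ψ2).subf := by
        simp [Form.subf, Form.self_mem_subf]
      have h2 : ψ2 ∈ (Form.and ψ1 ψ2).subf := by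
        simp [Form.subf, Form.self_mem_subf]
      exact ⟨mem_subBar_neg_of_subf (Form.subf_trans _ _ hψ h1),
        mem_subBar_neg_of_subf (Form.subf_trans _ _ hψ h2)⟩

lemma subBar_box {φ χ : Form} (h : Form.box χ ∈ φ.subBar) : χ ∈ φ.subBar := by
  rcases subBar_cases h with h | ⟨ψ, hψ, heq⟩
  · have h1 : χ ∈ (Form.box χ).subf := by
      simp [Form.subf, Form.self_mem_subf]
    exact mem_subBar_of_subf (Form.subf_trans _ _ h h1)
  · cases ψ <;> simp [Form.neg] at heq
    case dia ψ1 =>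
      subst heq
      have h1 : ψ1 ∈ (Form.dia ψ1).subf := by
        simp [Form.subf, Form.self_mem_subf]
      exact mem_subBar_neg_of_subf (Form.subf_trans _ _ hψ h1)

lemma sat_neg (M : Model) : ∀ (χ : Form) (w : M.W), M.sat w χ.neg ↔ ¬ M.sat w χ := by
  intro χ
  induction χ with
  | bot => intro w; simp [Form.neg, Model.sat]
  | top => intro w; simp [Form.neg, Model.sat]
  | pos p => intro w; simp [Form.neg, Model.sat]
  | npos p => intro w; simp [Form.neg, Model.sat]
  | and φ1 φ2 ih1 ih2 => intro w; simp [Form.neg, Model.sat, ih1, ih2]; try tauto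
  | or φ1 φ2 ih1 ih2 => intro w; simp [Form.neg, Model.sat, ih1, ih2]; try tauto
  | box φ1 ih => intro w; simp [Form.neg, Model.sat, ih]
  | dia φ1 ih => intro w; simp [Form.neg, Model.sat, ih]

lemma sat_imp (M : Model) (w : M.W) (φ ψ : Form) :
    M.sat w (φ.imp ψ) ↔ (M.sat w φ → M.sat w ψ) := by
  have : M.sat w (φ.imp ψ) ↔ (M.sat w φ.neg ∨ M.sat w ψ) := Iff.rfl
  rw [this, sat_neg]; tauto

lemma sat_foldr (M : Model) (w : M.W) :
    ∀ L : List Form, M.sat w (L.foldr Form.and Form.top) ↔ ∀ χ ∈ L, M.sat w χ := by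
  intro L
  induction L with
  | nil => simp [Model.sat]
  | cons x xs ih =>
    have : M.sat w ((x :: xs).foldr Form.and Form.top) ↔
        (M.sat w x ∧ M.sat w (xs.foldr Form.and Form.top)) := Iff.rfl
    rw [this, ih]; simp

lemma sat_th (M : Model) (w : M.W) (a : Finset Form) :
    M.sat w (th a) ↔ ∀ χ ∈ a, M.sat w χ := by
  rw [th, bigAnd, sat_foldr]
  constructor
  · intro h χ hχ; exact h χ (Finset.mem_toList.mpr hχ)
  · intro h χ hχ; exact h χ (Finset.mem_toList.mp hχ)

/-- If a maximal state's theory holds at a world, then the state contains every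
member of s̄ub(φ) true at that world. -/
lemma maxstate_mem (l : Logic) (φ : Form) (a : Finset Form) (h : MaxState l φ a)
    (M : Model) (w : M.W) (hw : ∀ χ ∈ a, M.sat w χ) :
    ∀ χ ∈ φ.subBar, M.sat w χ → χ ∈ a := by
  intro χ hχ hsat
  rcases subBar_cases hχ with h1 | ⟨ψ, hψ, rfl⟩
  · rcases h.2.2 χ h1 with h2 | h2
    · exact h2
    · exact absurd hsat ((sat_neg M χ w).mp (hw _ h2))
  · rcases h.2.2 ψ hψ with h2 | h2
    · exact absurd (hw ψ h2) ((sat_neg M ψ w).mp hsat)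
    · exact h2

/-- Extension of a model by a new root `none` whose successors are those of `w`,
plus itself when `rfl?` holds. -/
def extR (M : Model) (w : M.W) (rfl? : Prop) : Option M.W → Option M.W → Prop
  | none, none => rfl?
  | none, some v => M.R w v
  | some _, none => False
  | some v, some v' => M.R v v'

def extM (M : Model) (w : M.W) (VN : Set ℕ) (rfl? : Prop) : Model where
  W := Option M.W
  nonempty := ⟨none⟩
  finite := by haveI := M.finite; haveI := Fintype.ofFinite M.W; infer_instance
  R := extR M w rfl?
  V := fun x => match x with | none => VN | some v => M.V v

lemma extR_trans (M : Model) (w : M.W) (rfl? : Prop)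
    (ht : ∀ x y z, M.R x y → M.R y z → M.R x z) :
    ∀ x y z : Option M.W, extR M w rfl? x y → extR M w rfl? y z → extR M w rfl? x z := by
  rintro (_ | x) (_ | y) (_ | z) h1 h2 <;>
    simp only [extR] at * <;> first | exact h1 | exact h2 | exact ht _ _ _ h1 h2

lemma extM_sat (M : Model) (w : M.W) (VN : Set ℕ) (rfl? : Prop) :
    ∀ (χ : Form) (v : M.W), (extM M w VN rfl?).sat (some v) χ ↔ M.sat v χ := by
  intro χ
  induction χ with
  | bot => intro v; exact Iff.rfl
  | top => intro v; exact Iff.rfl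
  | pos p => intro v; exact Iff.rfl
  | npos p => intro v; exact Iff.rfl
  | and φ1 φ2 ih1 ih2 =>
    intro v
    show ((extM M w VN rfl?).sat (some v) φ1 ∧ (extM M w VN rfl?).sat (some v) φ2) ↔ _
    rw [ih1, ih2]; exact Iff.rfl
  | or φ1 φ2 ih1 ih2 =>
    intro v
    show ((extM M w VN rfl?).sat (some v) φ1 ∨ (extM M w VN rfl?).sat (some v) φ2) ↔ _
    rw [ih1, ih2]; exact Iff.rfl
  | box φ1 ih =>
    intro v
    constructor
    · intro h v' hr; exact (ih v').mp (h (some v') hr)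
    · rintro h (_ | v') hr
      · exact absurd hr (by simp [extM, extR])
      · exact (ih v').mpr (h v' hr)
  | dia φ1 ih =>
    intro v
    constructor
    · rintro ⟨(_ | v'), hr, hs⟩
      · exact absurd hr (by simp [extM, extR])
      · exact ⟨v', hr, (ih v').mp hs⟩
    · rintro ⟨v', hr, hs⟩
      exact ⟨some v', hr, (ih v').mpr hs⟩

/-- The key transfer lemma: the new root satisfies every formula of `a`. -/
lemma extM_sat_root (φ : Form) (a b : Finset Form)
    (M : Model) (w : M.W) (N : Model) (u : N.W)
    (hsubA : a ⊆ φ.subBar)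
    (hNa : ∀ χ ∈ a, N.sat u χ)
    (haMem : ∀ χ ∈ φ.subBar, N.sat u χ → χ ∈ a)
    (hMb : ∀ χ ∈ b, M.sat w χ)
    (hBD : ∀ ψ : Form, Form.box ψ ∈ a → Form.box ψ ∈ b)
    (hDD : ∀ ψ : Form, Form.dia ψ ∈ a → Form.dia ψ ∈ b)
    (rfl? : Prop) (hreflN : rfl? → ∀ x, N.R x x) :
    ∀ χ ∈ a, (extM M w (N.V u) rfl?).sat none χ := by
  intro χ
  induction χ with
  | bot => intro h; exact absurd (hNa _ h) (by simp [Model.sat])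
  | top => intro _; trivial
  | pos p => intro h; exact hNa _ h
  | npos p => intro h; exact hNa _ h
  | and χ1 χ2 ih1 ih2 =>
    intro h
    have hs : N.sat u (Form.and χ1 χ2) := hNa _ h
    obtain ⟨hb1, hb2⟩ := subBar_and (hsubA h)
    exact ⟨ih1 (haMem _ hb1 hs.1), ih2 (haMem _ hb2 hs.2)⟩
  | or χ1 χ2 ih1 ih2 =>
    intro h
    have hs : N.sat u (Form.or χ1 χ2) := hNa _ h
    obtain ⟨hb1, hb2⟩ := subBar_or (hsubA h)
    rcases hs with hs | hs
    · exact Or.inl (ih1 (haMem _ hb1 hs))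
    · exact Or.inr (ih2 (haMem _ hb2 hs))
  | box ψ ih =>
    intro h
    have hwb : M.sat w (Form.box ψ) := hMb _ (hBD ψ h)
    rintro (_ | v) hx
    · -- successor is the root itself; rfl? holds
      have hrf : rfl? := hx
      have huψ : N.sat u ψ := (hNa _ h : N.sat u (Form.box ψ)) u (hreflN hrf u)
      exact ih (haMem _ (subBar_box (hsubA h)) huψ)
    · exact (extM_sat M w (N.V u) rfl? ψ v).mpr (hwb v hx)
  | dia ψ ih =>
    intro h
    obtain ⟨v, hv, hs⟩ : M.sat w (Form.dia ψ) := hMb _ (hDD ψ h)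
    exact ⟨some v, hv, (extM_sat M w (N.V u) rfl? ψ v).mpr hs⟩

/-- for l ∈ {K4,KD4,S4} and maximal states a,b,c with
B(a)=B(b), D(a)=D(b), th(a)→◇th(c) valid and th(b)→◇th(c) not valid,
we get c = a, a ≠ b and l = S4. -/
theorem stmt11 (l : Logic) (hl : l = Logic.K4 ∨ l = Logic.KD4 ∨ l = Logic.S4)
    (φ : Form) (a b c : Finset Form)
    (ha : MaxState l φ a) (hb : MaxState l φ b) (hc : MaxState l φ c)
    (hB : BSet a = BSet b) (hD : DSet a = DSet b)
    (h1 : Valid l ((th a).imp (Form.dia (th c))))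
    (h2 : ¬ Valid l ((th b).imp (Form.dia (th c)))) :
    c = a ∧ a ≠ b ∧ l = Logic.S4 := by
  have hab : a ≠ b := by intro h; subst h; exact h2 h1
  rw [Valid] at h2; push_neg at h2
  obtain ⟨M, hM, w, hw⟩ := h2
  rw [sat_imp] at hw; push_neg at hw
  obtain ⟨hwb', hwc⟩ := hw
  have hMb : ∀ χ ∈ b, M.sat w χ := (sat_th M w b).mp hwb'
  obtain ⟨N, hN, u, hu⟩ := ha.2.1
  have hNa : ∀ χ ∈ a, N.sat u χ := (sat_th N u a).mp hu
  have haMem := maxstate_mem l φ a ha N u hNa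
  have hMtrans : ∀ x y z, M.R x y → M.R y z → M.R x z := by
    rcases hl with rfl | rfl | rfl
    · exact hM.1
    · exact hM.1.2
    · exact hM.1.2
  have hNrefl : l = Logic.S4 → ∀ x, N.R x x := by
    intro h; subst h; exact hN.1.1
  have hBD : ∀ ψ : Form, Form.box ψ ∈ a → Form.box ψ ∈ b := by
    intro ψ h
    have : Form.box ψ ∈ BSet b := by
      rw [← hB, BSet, Finset.mem_filter]
      exact ⟨h, rfl⟩
    exact (Finset.mem_filter.mp this).1
  have hDD : ∀ ψ : Form, Form.dia ψ ∈ a → Form.dia ψ ∈ b := by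
    intro ψ h
    have : Form.dia ψ ∈ DSet b := by
      rw [← hD, DSet, Finset.mem_filter]
      exact ⟨h, rfl⟩
    exact (Finset.mem_filter.mp this).1
  -- the extended model
  set M' : Model := extM M w (N.V u) (l = Logic.S4) with hM'def
  have hM' : M'.IsFor l := by
    constructor
    · rcases hl with rfl | rfl | rfl
      · exact extR_trans M w _ hMtrans
      · refine ⟨?_, extR_trans M w _ hMtrans⟩
        rintro (_ | v)
        · obtain ⟨y, hy⟩ := hM.1.1 w; exact ⟨some y, hy⟩
        · obtain ⟨y, hy⟩ := hM.1.1 v; exact ⟨some y, hy⟩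
      · refine ⟨?_, extR_trans M w _ hMtrans⟩
        rintro (_ | v)
        · exact rfl
        · exact hM.1.1 v
    · intro h5
      rcases hl with rfl | rfl | rfl <;> simp [Logic.K4, Logic.KD4, Logic.S4] at h5
  have hroot : ∀ χ ∈ a, M'.sat none χ :=
    extM_sat_root φ a b M w N u ha.1 hNa haMem hMb hBD hDD (l = Logic.S4) hNrefl
  have hsatA : M'.sat none (th a) := (sat_th M' none a).mpr hroot
  have hdc : M'.sat none (Form.dia (th c)) :=
    (sat_imp M' none (th a) (Form.dia (th c))).mp (h1 M' hM' none) hsatA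
  obtain ⟨x, hx, hxc⟩ := hdc
  cases x with
  | some v =>
    exfalso
    exact hwc ⟨v, hx, (extM_sat M w (N.V u) (l = Logic.S4) (th c) v).mp hxc⟩
  | none =>
    have hS4 : l = Logic.S4 := hx
    have hsatC : ∀ χ ∈ c, M'.sat none χ := (sat_th M' none c).mp hxc
    have hca : c = a := by
      apply Finset.Subset.antisymm
      · intro χ hχ
        exact maxstate_mem l φ a ha M' none hroot χ (hc.1 hχ) (hsatC χ hχ)
      · intro χ hχ
        exact maxstate_mem l φ c hc M' none hsatC χ (ha.1 hχ) (hroot χ hχ)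
    exact ⟨hca, hab, hS4⟩
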